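/- Characterization of zero excess cost in the ACMP: let π be a trajectory from s to t, and for α in the standard simplex define δ(α) = max(0, (α-cost of π) − min over all paths π' from s to t of (α-cost of π')). Then the infimum of δ(α) over the standard simplex equals 0 if and only if there exists α in the standard simplex such that π is α-optimal, i.e., the α-cost of π is at most the α-cost of every trajectory from s to t. -/

import Mathlib

open scoped NNReal

variable {V : Type*}

/-- `f 0, f 1, …, f m` is a trajectory in the graph with edge relation `E`. -/
def IsTrajE (E : V → V → Prop) (m : ℕ) (f : ℕ → V) : Prop :=
  ∀ i < m, E (f i) (f (i + 1))

/-- The `α`-cost of the trajectory `f 0, …, f m`: `∑ j, α j` times the `j`-th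
coordinate of its cost vector `∑_{i<m} c (f i) (f (i+1))`. -/
noncomputable def aCost {d : ℕ} (c : V → V → Fin d → ℝ≥0) (α : Fin d → ℝ)
    (m : ℕ) (f : ℕ → V) : ℝ :=
  ∑ j, α j * ∑ i ∈ Finset.range m, (c (f i) (f (i + 1)) j : ℝ)

/-- The trajectory `f 0, …, f m` is `α`-optimal: it is a trajectory whose `α`-cost is at
most the `α`-cost of every trajectory with the same endpoints. -/
def AOpt {d : ℕ} (E : V → V → Prop) (c : V → V → Fin d → ℝ≥0) (α : Fin d → ℝ)
    (m : ℕ) (f : ℕ → V) : Prop :=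
  IsTrajE E m f ∧ ∀ (m' : ℕ) (f' : ℕ → V), f' 0 = f 0 → f' m' = f m →
    IsTrajE E m' f' → aCost c α m f ≤ aCost c α m' f'

/-- The trajectory `f 0, …, f m` is preference-optimal: it is `α`-optimal for
some `α` in the standard simplex. -/
def PrefOpt {d : ℕ} (E : V → V → Prop) (c : V → V → Fin d → ℝ≥0)
    (m : ℕ) (f : ℕ → V) : Prop :=
  ∃ α ∈ stdSimplex ℝ (Fin d), AOpt E c α m f

/-- `f 0, …, f m` is a path: a trajectory with no repeated vertices. -/
def IsPath (E : V → V → Prop) (m : ℕ) (f : ℕ → V) : Prop :=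
  IsTrajE E m f ∧ ∀ a ≤ m, ∀ b ≤ m, f a = f b → a = b

/-- The minimum `α`-cost over all paths from `s` to `t`. -/
noncomputable def minPathCost {d : ℕ} (E : V → V → Prop) (c : V → V → Fin d → ℝ≥0)
    (α : Fin d → ℝ) (s t : V) : ℝ :=
  sInf {x | ∃ (m : ℕ) (f : ℕ → V), f 0 = s ∧ f m = t ∧ IsPath E m f ∧ x = aCost c α m f}

/-- `δ(α)` of the additional cost minimization problem for the trajectory
`π 0, …, π m` from `s` to `t`. -/
noncomputable def acmpDelta {d : ℕ} (E : V → V → Prop) (c : V → V → Fin d → ℝ≥0)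
    (s t : V) (m : ℕ) (π : ℕ → V) (α : Fin d → ℝ) : ℝ :=
  max 0 (aCost c α m π - minPathCost E c α s t)


noncomputable def costVec {d : ℕ} (c : V → V → Fin d → ℝ≥0) (m : ℕ) (f : ℕ → V) :
    Fin d → ℝ≥0 := fun j => ∑ i ∈ Finset.range m, c (f i) (f (i + 1)) j

lemma aCost_eq_costVec {d : ℕ} (c : V → V → Fin d → ℝ≥0) (α : Fin d → ℝ) (m : ℕ) (f : ℕ → V) :
    aCost c α m f = ∑ j, α j * (costVec c m f j : ℝ) := by
  simp [aCost, costVec]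

lemma cut_lemma {d : ℕ} (E : V → V → Prop) (c : V → V → Fin d → ℝ≥0)
    {m a b : ℕ} (f : ℕ → V) (hab : a < b) (hbm : b ≤ m) (hfe : f a = f b)
    (hf : IsTrajE E m f) :
    IsTrajE E (m - (b - a)) (fun i => if i ≤ a then f i else f (i + (b - a))) ∧
    (fun i => if i ≤ a then f i else f (i + (b - a))) 0 = f 0 ∧
    (fun i => if i ≤ a then f i else f (i + (b - a))) (m - (b - a)) = f m ∧
    ∀ j, costVec c (m - (b - a)) (fun i => if i ≤ a then f i else f (i + (b - a))) j
      ≤ costVec c m f j := by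
  set g : ℕ → V := fun i => if i ≤ a then f i else f (i + (b - a)) with hg
  set m' := m - (b - a) with hm'
  have ham' : a ≤ m' := by omega
  refine ⟨?_, by simp [hg], ?_, ?_⟩
  · intro i hi
    rcases lt_trichotomy i a with h | h | h
    · simpa [hg, h.le, Nat.succ_le_of_lt h] using hf i (by omega)
    · subst h
      have : g i = f b := by simp [hg, hfe]
      have h2 : g (i + 1) = f (b + 1) := by
        have : i + 1 + (b - i) = b + 1 := by omega
        simp [hg, this]
      rw [this, h2]
      exact hf b (by omega)
    · have h1 : g i = f (i + (b - a)) := by simp [hg, h.not_ge]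
      have h2 : g (i + 1) = f (i + (b - a) + 1) := by
        have hne : ¬ i + 1 ≤ a := by omega
        have : i + 1 + (b - a) = i + (b - a) + 1 := by omega
        simp [hg, hne, this]
      rw [h1, h2]
      exact hf (i + (b - a)) (by omega)
  · by_cases h : m' ≤ a
    · have hba : b = m := by omega
      have h2 : m' = a := by omega
      simp [hg, h2, hfe, hba]
    · have : m' + (b - a) = m := by omega
      simp [hg, h, this]
  · intro j
    have hterm : ∀ i ∈ Finset.Ico a m',
        c (g i) (g (i + 1)) j = c (f (i + (b - a))) (f (i + (b - a) + 1)) j := by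
      intro i hi
      simp only [Finset.mem_Ico] at hi
      have e1 : g i = f (i + (b - a)) := by
        rcases eq_or_lt_of_le hi.1 with h | h
        · have hb' : i + (b - a) = b := by omega
          rw [hb']
          simp only [hg]
          rw [if_pos (by omega : i ≤ a), ← h]
          exact hfe
        · simp [hg, h.not_ge]
      have e2 : g (i + 1) = f (i + (b - a) + 1) := by
        have hne : ¬ i + 1 ≤ a := by omega
        have h3 : i + 1 + (b - a) = i + (b - a) + 1 := by omega
        simp [hg, hne, h3]
      rw [e1, e2]
    have hterm2 : ∀ i ∈ Finset.range a,
        c (g i) (g (i + 1)) j = c (f i) (f (i + 1)) j := by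
      intro i hi
      simp only [Finset.mem_range] at hi
      have e1 : g i = f i := by simp [hg, hi.le]
      have e2 : g (i + 1) = f (i + 1) := by simp [hg, Nat.succ_le_of_lt hi]
      rw [e1, e2]
    calc costVec c m' g j
        = ∑ i ∈ Finset.Ico 0 a, c (g i) (g (i + 1)) j
          + ∑ i ∈ Finset.Ico a m', c (g i) (g (i + 1)) j := by
          rw [Finset.sum_Ico_consecutive _ (Nat.zero_le a) ham']
          simp only [costVec]
          rw [Finset.range_eq_Ico]
      _ = ∑ i ∈ Finset.range a, c (f i) (f (i + 1)) j
          + ∑ i ∈ Finset.Ico b m, c (f i) (f (i + 1)) j := by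
          rw [← Finset.range_eq_Ico]
          congr 1
          · exact Finset.sum_congr rfl hterm2
          · rw [Finset.sum_congr rfl hterm, Finset.sum_Ico_eq_sum_range,
              Finset.sum_Ico_eq_sum_range]
            have hlen : m' - a = m - b := by omega
            rw [hlen]
            refine Finset.sum_congr rfl fun i _ => ?_
            have e : a + i + (b - a) = b + i := by omega
            rw [e]
      _ ≤ ∑ i ∈ Finset.range m, c (f i) (f (i + 1)) j := by
          rw [← Finset.sum_union (by
            simp only [Finset.disjoint_left, Finset.mem_range, Finset.mem_Ico]
            omega)]
          refine Finset.sum_le_sum_of_subset ?_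
          intro x hx
          simp only [Finset.mem_union, Finset.mem_range, Finset.mem_Ico] at hx ⊢
          omega
      _ = costVec c m f j := rfl

lemma exists_path_costVec_le {d : ℕ} (E : V → V → Prop) (c : V → V → Fin d → ℝ≥0) :
    ∀ (m : ℕ) (f : ℕ → V), IsTrajE E m f →
      ∃ (m' : ℕ) (f' : ℕ → V), f' 0 = f 0 ∧ f' m' = f m ∧ IsPath E m' f' ∧
        ∀ j, costVec c m' f' j ≤ costVec c m f j := by
  intro m
  induction m using Nat.strong_induction_on with
  | _ m ih =>
    intro f hf
    by_cases hinj : ∀ a ≤ m, ∀ b ≤ m, f a = f b → a = b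
    · exact ⟨m, f, rfl, rfl, ⟨hf, hinj⟩, fun j => le_rfl⟩
    · push_neg at hinj
      obtain ⟨a, ha, b, hb, hfe, hab⟩ := hinj
      -- wlog a < b
      have key : ∀ a b : ℕ, a < b → b ≤ m → f a = f b →
          ∃ (m' : ℕ) (f' : ℕ → V), f' 0 = f 0 ∧ f' m' = f m ∧ IsPath E m' f' ∧
            ∀ j, costVec c m' f' j ≤ costVec c m f j := by
        intro a b hab hbm hfe
        obtain ⟨htraj, h0, hms, hcost⟩ := cut_lemma E c f hab hbm hfe hf
        have hlt : m - (b - a) < m := by omega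
        obtain ⟨m', f', h0', hm', hp', hc'⟩ := ih _ hlt _ htraj
        exact ⟨m', f', h0'.trans h0, hm'.trans hms, hp',
          fun j => (hc' j).trans (hcost j)⟩
      rcases hab.lt_or_gt with h | h
      · exact key a b h hb hfe
      · exact key b a h ha hfe.symm

lemma path_len_lt [Fintype V] {E : V → V → Prop} {m : ℕ} {f : ℕ → V}
    (h : IsPath E m f) : m + 1 ≤ Fintype.card V := by
  have : Function.Injective (fun i : Fin (m + 1) => f i) := by
    intro ⟨x, hx⟩ ⟨y, hy⟩ hxy
    have := h.2 x (by omega) y (by omega) hxy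
    exact Fin.ext this
  simpa using Fintype.card_le_of_injective _ this

lemma costVec_set_finite [Fintype V] {d : ℕ} (E : V → V → Prop)
    (c : V → V → Fin d → ℝ≥0) (s t : V) :
    {w : Fin d → ℝ≥0 | ∃ (m : ℕ) (f : ℕ → V),
      f 0 = s ∧ f m = t ∧ IsPath E m f ∧ w = costVec c m f}.Finite := by
  have hV : Nonempty V := ⟨s⟩
  set N := Fintype.card V with hN
  have hN1 : 1 ≤ N := Fintype.card_pos
  set F : Fin N × (Fin N → V) → (Fin d → ℝ≥0) :=
    fun p => costVec c p.1 (fun i => p.2 ⟨min i (N - 1), by omega⟩) with hF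
  refine Set.Finite.subset (Set.finite_range F) ?_
  rintro w ⟨m, f, -, -, hp, rfl⟩
  have hm : m + 1 ≤ N := path_len_lt hp
  refine ⟨(⟨m, by omega⟩, fun j => f j), ?_⟩
  simp only [hF, costVec]
  funext j
  refine Finset.sum_congr rfl fun i hi => ?_
  simp only [Finset.mem_range] at hi
  have e1 : min i (N - 1) = i := by omega
  have e2 : min (i + 1) (N - 1) = i + 1 := by omega
  simp [e1, e2]

open Finset in
lemma continuous_finset_inf' {ι X : Type*} [TopologicalSpace X] (s : Finset ι)
    (hs : s.Nonempty) (g : ι → X → ℝ) (hg : ∀ i, Continuous (g i)) :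
    Continuous (fun x => s.inf' hs fun i => g i x) := by
  induction hs using Finset.Nonempty.cons_induction with
  | singleton i => simpa using hg i
  | cons i s hi hsne ih =>
    have : (fun x => (Finset.cons i s hi).inf' (by simp) fun j => g j x) =
        fun x => (g i x) ⊓ (s.inf' hsne fun j => g j x) := by
      funext x; rw [Finset.inf'_cons]
    rw [this]
    exact (hg i).min ih

lemma stdSimplex_ne {d : ℕ} (hd : 1 ≤ d) : (stdSimplex ℝ (Fin d)).Nonempty := by
  refine ⟨fun j => if j = ⟨0, hd⟩ then 1 else 0, fun j => by positivity, ?_⟩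
  simp


/-- The infimum of `δ(α)` over the standard simplex equals `0` iff there exists `α`
in the standard simplex such that `π` is `α`-optimal. -/
theorem acmp_inf_zero_iff_alpha_optimal [Fintype V]
    (E : V → V → Prop) (d : ℕ) (hd : 1 ≤ d) (c : V → V → Fin d → ℝ≥0)
    (s t : V) (m : ℕ) (π : ℕ → V)
    (hπ0 : π 0 = s) (hπm : π m = t) (hπ : IsTrajE E m π)
    (hpath : ∃ (m' : ℕ) (f : ℕ → V), f 0 = s ∧ f m' = t ∧ IsPath E m' f) :
    sInf {x | ∃ α ∈ stdSimplex ℝ (Fin d), x = acmpDelta E c s t m π α} = 0 ↔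
      ∃ α ∈ stdSimplex ℝ (Fin d), AOpt E c α m π := by
  classical
  obtain ⟨m₀, f₀, hf₀0, hf₀m, hf₀⟩ := hpath
  set W : Set (Fin d → ℝ≥0) := {w | ∃ (m : ℕ) (f : ℕ → V),
      f 0 = s ∧ f m = t ∧ IsPath E m f ∧ w = costVec c m f} with hWdef
  have hWfin : W.Finite := costVec_set_finite E c s t
  have hWne : W.Nonempty := ⟨costVec c m₀ f₀, m₀, f₀, hf₀0, hf₀m, hf₀, rfl⟩
  set dot : (Fin d → ℝ) → (Fin d → ℝ≥0) → ℝ := fun α w => ∑ j, α j * (w j : ℝ) with hdot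
  have hset : ∀ α : Fin d → ℝ, {x | ∃ (m' : ℕ) (f' : ℕ → V),
      f' 0 = s ∧ f' m' = t ∧ IsPath E m' f' ∧ x = aCost c α m' f'} = dot α '' W := by
    intro α; ext x
    constructor
    · rintro ⟨m', f', h0, hm, hp, rfl⟩
      exact ⟨costVec c m' f', ⟨m', f', h0, hm, hp, rfl⟩, (aCost_eq_costVec c α m' f').symm⟩
    · rintro ⟨w, ⟨m', f', h0, hm, hp, rfl⟩, rfl⟩
      exact ⟨m', f', h0, hm, hp, (aCost_eq_costVec c α m' f').symm ▸ rfl⟩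
  have hmin : ∀ α : Fin d → ℝ, minPathCost E c α s t = sInf (dot α '' W) := by
    intro α; rw [minPathCost, hset α]
  have hbdd : ∀ α : Fin d → ℝ, BddBelow (dot α '' W) := fun α => (hWfin.image _).bddBelow
  have hminle : ∀ (α : Fin d → ℝ) w, w ∈ W → minPathCost E c α s t ≤ dot α w := by
    intro α w hw
    rw [hmin α]
    exact csInf_le (hbdd α) ⟨w, hw, rfl⟩
  have key : ∀ α ∈ stdSimplex ℝ (Fin d), (acmpDelta E c s t m π α = 0 ↔ AOpt E c α m π) := by
    intro α hα
    constructor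
    · intro h0
      have hle : aCost c α m π ≤ minPathCost E c α s t := by
        have := max_eq_left_iff.mp h0
        linarith
      refine ⟨hπ, ?_⟩
      intro m' f' h0' hm' htraj'
      obtain ⟨mp, fp, hp0, hpm, hp, hcle⟩ := exists_path_costVec_le E c m' f' htraj'
      have hwmem : costVec c mp fp ∈ W :=
        ⟨mp, fp, by rw [hp0, h0', hπ0], by rw [hpm, hm', hπm], hp, rfl⟩
      calc aCost c α m π ≤ minPathCost E c α s t := hle
        _ ≤ dot α (costVec c mp fp) := hminle α _ hwmem
        _ ≤ dot α (costVec c m' f') := by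
            refine Finset.sum_le_sum fun j _ => ?_
            exact mul_le_mul_of_nonneg_left (NNReal.coe_le_coe.mpr (hcle j)) (hα.1 j)
        _ = aCost c α m' f' := (aCost_eq_costVec c α m' f').symm
    · intro hopt
      have hle : aCost c α m π ≤ minPathCost E c α s t := by
        rw [hmin α]
        refine le_csInf (hWne.image _) ?_
        rintro x ⟨w, ⟨m', f', h0, hm, hp, rfl⟩, rfl⟩
        exact le_of_le_of_eq (hopt.2 m' f' (by rw [h0, hπ0]) (by rw [hm, hπm]) hp.1)
          (aCost_eq_costVec c α m' f')
      have : aCost c α m π - minPathCost E c α s t ≤ 0 := by linarith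
      simp [acmpDelta, max_eq_left this]
  constructor
  · intro hinf
    set Wf : Finset (Fin d → ℝ≥0) := hWfin.toFinset with hWf
    have hWfne : Wf.Nonempty := hWfin.toFinset_nonempty.mpr hWne
    have hminW : ∀ α : Fin d → ℝ, minPathCost E c α s t = Wf.inf' hWfne (dot α) := by
      intro α
      rw [hmin α, Finset.inf'_eq_csInf_image, hWfin.coe_toFinset]
    have hcont : Continuous (acmpDelta E c s t m π) := by
      have h1 : Continuous fun α : Fin d → ℝ => aCost c α m π := by
        unfold aCost
        exact continuous_finset_sum _ fun j _ => (continuous_apply j).mul continuous_const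
      have h2 : Continuous fun α : Fin d → ℝ => minPathCost E c α s t := by
        have hc := continuous_finset_inf' Wf hWfne (fun w (α : Fin d → ℝ) => dot α w)
          (fun w => continuous_finset_sum _ fun j _ => (continuous_apply j).mul continuous_const)
        simpa [← hminW] using hc
      unfold acmpDelta
      exact continuous_const.max (h1.sub h2)
    obtain ⟨α, hαm, hαmin⟩ := (isCompact_stdSimplex ℝ (Fin d)).exists_isMinOn
      (stdSimplex_ne hd) hcont.continuousOn
    refine ⟨α, hαm, (key α hαm).1 ?_⟩
    have hSne : {x | ∃ β ∈ stdSimplex ℝ (Fin d), x = acmpDelta E c s t m π β}.Nonempty :=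
      ⟨_, α, hαm, rfl⟩
    have h1 : acmpDelta E c s t m π α ≤ 0 := by
      rw [← hinf]
      refine le_csInf hSne ?_
      rintro x ⟨β, hβ, rfl⟩
      exact hαmin hβ
    exact le_antisymm h1 (le_max_left _ _)
  · rintro ⟨α, hαm, hopt⟩
    have hδ0 : acmpDelta E c s t m π α = 0 := (key α hαm).2 hopt
    refine le_antisymm ?_ ?_
    · exact csInf_le ⟨0, by rintro x ⟨β, hβ, rfl⟩; exact le_max_left _ _⟩ ⟨α, hαm, hδ0.symm⟩
    · exact le_csInf ⟨_, α, hαm, rfl⟩ (by rintro x ⟨β, hβ, rfl⟩; exact le_max_left _ _)
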